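/- (Pointwise sufficient condition, feature-label, ε = 0.) Let P = α₁·P₁ + α₂·P₂ + (1−α)·P₀ with α₁ > 0, α₂ ≥ 0, α = α₁ + α₂ ≤ 1, where P₁ is the feature-label collective distribution with target y₁* and signal map g₁, and P₂ is an arbitrary PMF on X × Y. Let x ∈ X₁ satisfy P₁(x) > 0. If α₁·P₁(x) > α₂·P₂(x)·Δ_{P₂,x}(y₁*) + (1−α)·P₀(x)·Δ_{P₀,x}(y₁*), then the mixture satisfies P(x, y₁*) > P(x, y) for every y ≠ y₁*; in particular, any classifier f with f(x') maximizing y ↦ P(y|x') for all x' with P(x') > 0 satisfies f(x) = y₁*. -/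
import Mathlib


open Finset

noncomputable section

variable {X Y : Type*}

/-- A probability mass function on `X × Y`. -/
def IsPMF [Fintype X] [Fintype Y] (P : X × Y → ℝ) : Prop :=
  (∀ z, 0 ≤ P z) ∧ ∑ z, P z = 1

/-- The `X`-marginal `P(x) = ∑_y P(x,y)`. -/
def marg [Fintype Y] (P : X × Y → ℝ) (x : X) : ℝ := ∑ y, P (x, y)

/-- The conditional probability `P(y | x) = P(x,y) / P(x)` (zero when `P(x) = 0`,
by the `division by zero = 0` convention). -/
def condProb [Fintype Y] (P : X × Y → ℝ) (y : Y) (x : X) : ℝ := P (x, y) / marg P x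

/-- Pointwise suboptimality gap `Δ_{Q,x}(y*) = max_y Q(y|x) − Q(y*|x)` when `Q(x) > 0`,
and `0` otherwise. -/
def gapAt [Fintype Y] [Nonempty Y] (Q : X × Y → ℝ) (x : X) (ystar : Y) : ℝ :=
  if 0 < marg Q x then
    (Finset.univ.sup' Finset.univ_nonempty fun y => condProb Q y x) - condProb Q ystar x
  else 0

/-- Suboptimality gap `Δ_Q(X₁, y*) = max_{x ∈ X₁} Δ_{Q,x}(y*)` of the signal set
`X₁ = g(X)` on `Q`. -/
def gapSig [Fintype X] [Fintype Y] [Nonempty X] [Nonempty Y] [DecidableEq X]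
    (Q : X × Y → ℝ) (g : X → X) (ystar : Y) : ℝ :=
  (Finset.univ.image g).sup' (Finset.univ_nonempty.image g) fun x => gapAt Q x ystar

/-- Overlap `Q(X₁) = ∑_{x ∈ X₁} Q(x)` of `Q` with the signal set `X₁ = g(X)`. -/
def overlap [Fintype X] [Fintype Y] [DecidableEq X] (Q : X × Y → ℝ) (g : X → X) : ℝ :=
  ∑ x ∈ Finset.univ.image g, marg Q x

/-- Total variation distance between two PMFs on `X × Y`. -/
def tvDist [Fintype X] [Fintype Y] (P P' : X × Y → ℝ) : ℝ :=
  (1 / 2) * ∑ z, |P z - P' z|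

/-- A classifier `f` is `ε`-suboptimal under `P` if there is a PMF `P'` within total
variation `ε` of `P` such that `f x` maximizes `y ↦ P'(y|x)` for every `x` with
`P'(x) > 0`. -/
def Suboptimal [Fintype X] [Fintype Y] (P : X × Y → ℝ) (ε : ℝ) (f : X → Y) : Prop :=
  ∃ P' : X × Y → ℝ, IsPMF P' ∧ tvDist P P' ≤ ε ∧
    ∀ x, 0 < marg P' x → ∀ y, condProb P' y x ≤ condProb P' (f x) x

/-- Pushforward of `P` along a map `m : X × Y → X × Y`. -/
def pushforward [Fintype X] [Fintype Y] [DecidableEq X] [DecidableEq Y]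
    (m : X × Y → X × Y) (P : X × Y → ℝ) : X × Y → ℝ :=
  fun z => ∑ w ∈ Finset.univ.filter (fun w => m w = z), P w

/-- Success rate `S = Pr_{x ∼ P₀-X-marginal}[f (g x) = y*]`. -/
def successRate [Fintype X] [Fintype Y] [DecidableEq Y]
    (P0 : X × Y → ℝ) (f : X → Y) (g : X → X) (ystar : Y) : ℝ :=
  ∑ x ∈ Finset.univ.filter (fun x => f (g x) = ystar), marg P0 x

/-- Mass `P₀(g⁻¹({x*}))` of the preimage of `x*` under the `X`-marginal of `P₀`. -/
def preMass [Fintype X] [Fintype Y] [DecidableEq X]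
    (P0 : X × Y → ℝ) (g : X → X) (xstar : X) : ℝ :=
  ∑ x ∈ Finset.univ.filter (fun x => g x = xstar), marg P0 x


lemma gap_bound [Fintype Y] [Nonempty Y] (Q : X × Y → ℝ) (hQ : ∀ z, 0 ≤ Q z)
    (x : X) (y1 y : Y) : Q (x, y) - Q (x, y1) ≤ marg Q x * gapAt Q x y1 := by
  by_cases h : 0 < marg Q x
  · rw [gapAt, if_pos h]
    have hle : condProb Q y x ≤ Finset.univ.sup' Finset.univ_nonempty
        fun y => condProb Q y x :=
      Finset.le_sup' (fun y => condProb Q y x) (Finset.mem_univ y)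
    have := mul_le_mul_of_nonneg_left (sub_le_sub_right hle (condProb Q y1 x)) h.le
    calc Q (x, y) - Q (x, y1)
        = marg Q x * (condProb Q y x - condProb Q y1 x) := by
          rw [condProb, condProb, mul_sub, mul_div_cancel₀ _ h.ne',
            mul_div_cancel₀ _ h.ne']
      _ ≤ _ := this
  · have hm : marg Q x = 0 := le_antisymm (not_lt.mp h)
      (Finset.sum_nonneg fun _ _ => hQ _)
    have hz : ∀ y', Q (x, y') = 0 := fun y' => by
      have := (Finset.sum_eq_zero_iff_of_nonneg (fun _ _ => hQ _)).mp hm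
      exact this y' (Finset.mem_univ y')
    rw [gapAt, if_neg h, hz, hz, hm]
    simp

/-- pointwise sufficient condition, feature-label, ε = 0. -/
theorem pointwise_feature_label_eps_zero
    [Fintype X] [Fintype Y] [Nonempty X] [Nonempty Y] [DecidableEq X] [DecidableEq Y]
    (P0 P2 : X × Y → ℝ) (hP0 : IsPMF P0) (hP2 : IsPMF P2)
    (g1 : X → X) (hg1 : Function.Injective g1) (y1 : Y)
    (P1 : X × Y → ℝ) (hP1 : P1 = pushforward (fun w => (g1 w.1, y1)) P0)
    (α1 α2 : ℝ) (hα1 : 0 < α1) (hα2 : 0 ≤ α2) (hα : α1 + α2 ≤ 1)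
    (P : X × Y → ℝ) (hP : P = fun z => α1 * P1 z + α2 * P2 z + (1 - (α1 + α2)) * P0 z)
    (x : X) (hx : x ∈ Finset.univ.image g1) (hx1 : 0 < marg P1 x)
    (hcond : α1 * marg P1 x >
      α2 * marg P2 x * gapAt P2 x y1 + (1 - (α1 + α2)) * marg P0 x * gapAt P0 x y1) :
    (∀ y, y ≠ y1 → P (x, y1) > P (x, y)) ∧
    (∀ f : X → Y,
      (∀ x', 0 < marg P x' → ∀ y, condProb P y x' ≤ condProb P (f x') x') → f x = y1) := by
  -- P1 vanishes off y1
  have hP1zero : ∀ y, y ≠ y1 → P1 (x, y) = 0 := by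
    intro y hy
    rw [hP1, pushforward]
    apply Finset.sum_eq_zero
    intro w hw
    simp only [Finset.mem_filter, Prod.mk.injEq] at hw
    exact absurd hw.2.2 hy.symm
  have hP1marg : P1 (x, y1) = marg P1 x := by
    rw [marg, Finset.sum_eq_single y1]
    · intro b _ hb; exact hP1zero b hb
    · intro h; exact absurd (Finset.mem_univ y1) h
  have hP1nn : ∀ z, 0 ≤ P1 z := by
    intro z; rw [hP1, pushforward]
    exact Finset.sum_nonneg fun w _ => hP0.1 w
  have hPnn : ∀ z, 0 ≤ P z := by
    intro z; rw [hP]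
    have h1 : 0 ≤ 1 - (α1 + α2) := by linarith
    have := hP0.1 z; have := hP2.1 z; have := hP1nn z
    positivity
  have key : ∀ y, y ≠ y1 → P (x, y1) > P (x, y) := by
    intro y hy
    have b2 := gap_bound P2 hP2.1 x y1 y
    have b0 := gap_bound P0 hP0.1 x y1 y
    have h2 := mul_le_mul_of_nonneg_left b2 hα2
    have h0 := mul_le_mul_of_nonneg_left b0 (by linarith : (0:ℝ) ≤ 1 - (α1 + α2))
    simp only [hP]
    rw [hP1zero y hy, hP1marg]
    nlinarith [hcond]
  refine ⟨key, fun f hf => ?_⟩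
  have hmargP : 0 < marg P x := by
    have h1 : 0 < P (x, y1) := by
      have := hP2.1 (x, y1); have := hP0.1 (x, y1)
      rw [hP]; simp only
      rw [hP1marg]
      nlinarith
    calc (0:ℝ) < P (x, y1) := h1
      _ ≤ marg P x := Finset.single_le_sum (fun y _ => hPnn (x, y)) (Finset.mem_univ y1)
  by_contra hfx
  have := hf x hmargP y1
  rw [condProb, condProb] at this
  have := (div_le_div_iff_of_pos_right hmargP).mp this
  exact absurd this (not_le.mpr (key (f x) hfx))
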